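/- For every nonnegative integer n, the reduced factor complexity of the regular paperfolding sequence satisfies ρ_f^red(8n+7) = 6. -/
import Mathlib


/-- The reduction of a word: replace each maximal run of identical characters
by a single character. -/
def red {α : Type*} [DecidableEq α] (w : List α) : List α :=
  w.destutter (· ≠ ·)

/-- The length-`k` factor of the infinite sequence `x` (1-indexed) starting at
position `i`. -/
def factorAt {α : Type*} (x : ℕ → α) (i k : ℕ) : List α :=
  (List.range k).map (fun j => x (i + j))

/-- The reduced factor complexity: the number of length-`n` factors of `x`,
counted up to reduced-equivalence (`red v = red w`). -/
noncomputable def redFactorComplexity {α : Type*} [DecidableEq α]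
    (x : ℕ → α) (n : ℕ) : ℕ :=
  Set.ncard { u : List α | ∃ i ≥ 1, u = red (factorAt x i n) }

/-- The Thue–Morse sequence (1-indexed): `t n` is the parity of the number of
1's in the binary expansion of `n - 1`. -/
def thueMorse (n : ℕ) : Bool :=
  decide ((Nat.digits 2 (n - 1)).sum % 2 = 1)

/-- The number of alternations (occurrences of 01 or 10) in a binary word. -/
def alt (w : List Bool) : ℕ :=
  (List.zipWith (fun a b => a != b) w w.tail).count true

/-- The minimum number of alternations among length-`k` factors of Thue–Morse. -/
noncomputable def tmAltMin (k : ℕ) : ℕ :=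
  sInf { a : ℕ | ∃ i ≥ 1, a = alt (factorAt thueMorse i k) }

/-- The maximum number of alternations among length-`k` factors of Thue–Morse. -/
noncomputable def tmAltMax (k : ℕ) : ℕ :=
  sSup { a : ℕ | ∃ i ≥ 1, a = alt (factorAt thueMorse i k) }

/-- The Thue–Morse morphism `0 → 01`, `1 → 10`. -/
def mu (w : List Bool) : List Bool :=
  w.flatMap (fun b => if b then [true, false] else [false, true])

/-- The regular paperfolding sequence (1-indexed): writing `n = n' * 2^k` with
`n'` odd, `f n = 1` iff `n' ≡ 3 (mod 4)`. -/
def paperfold (n : ℕ) : Bool :=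
  decide ((n / 2 ^ (n.factorization 2)) % 4 = 3)

/-- The reduced abelian complexity: the number of length-`n` factors of `x`,
counted up to the equivalence identifying `v` and `w` whenever `red v` is a
rearrangement of the characters of `red w`. -/
noncomputable def redAbelianComplexity {α : Type*} [DecidableEq α]
    (x : ℕ → α) (n : ℕ) : ℕ :=
  Set.ncard { m : Multiset α | ∃ i ≥ 1, m = ↑(red (factorAt x i n)) }

-- auxiliary
def altList : Bool → ℕ → List Bool
  | _, 0 => []
  | b, r+1 => b :: altList (!b) r

lemma altList_length (b : Bool) (r : ℕ) : (altList b r).length = r := by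
  induction r generalizing b with
  | zero => rfl
  | succ r ih => simp [altList, ih]

lemma altList_ne₁ (b c : Bool) (r s : ℕ) (h : r ≠ s) : altList b r ≠ altList c s :=
  fun he => h (by rw [← altList_length b r, he, altList_length])

lemma altList_ne₂ (r : ℕ) : altList false (r+1) ≠ altList true (r+1) := by
  simp [altList]

lemma alt_cons (a b : Bool) (t : List Bool) :
    alt (a :: b :: t) = (if a = b then 0 else 1) + alt (b :: t) := by
  cases a <;> cases b <;> simp [alt, List.count_cons] <;> omega

lemma red_cons (t : List Bool) : ∀ a : Bool, red (a :: t) = altList a (alt (a :: t) + 1) := by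
  induction t with
  | nil => intro a; rfl
  | cons b t ih =>
    intro a
    by_cases h : a = b
    · subst h
      have h1 : red (a :: a :: t) = red (a :: t) := by
        show List.destutter _ _ = _
        rw [List.destutter_cons_cons, if_neg (by simp : ¬ a ≠ a)]
        rfl
      rw [h1, ih a, alt_cons]
      simp
    · have hb : b = !a := by cases a <;> cases b <;> simp_all
      have h1 : red (a :: b :: t) = a :: red (b :: t) := by
        show List.destutter _ _ = _
        rw [List.destutter_cons_cons, if_pos h]
        rfl
      rw [h1, ih b, alt_cons, if_neg h,
        show 1 + alt (b::t) + 1 = (alt (b::t) + 1) + 1 from by ring]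
      show _ = a :: altList (!a) (alt (b::t) + 1)
      rw [hb]

lemma factorAt_succ {α : Type*} (x : ℕ → α) (i k : ℕ) :
    factorAt x i (k+1) = x i :: factorAt x (i+1) k := by
  unfold factorAt
  rw [List.range_succ_eq_map, List.map_cons, List.map_map]
  refine congrArg₂ _ (by simp) (List.map_congr_left fun j _ => ?_)
  show x (i + (j+1)) = x (i + 1 + j)
  congr 1
  omega

lemma red_factor (i k : ℕ) :
    red (factorAt paperfold i (k+1)) =
      altList (paperfold i) (alt (factorAt paperfold i (k+1)) + 1) := by
  rw [factorAt_succ]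
  exact red_cons _ _

def g (j : ℕ) : ℕ := if paperfold j = paperfold (j+1) then 0 else 1

lemma g_le_one (j : ℕ) : g j ≤ 1 := by unfold g; split <;> simp

lemma alt_factor (i k : ℕ) :
    alt (factorAt paperfold i (k+1)) = ∑ j ∈ Finset.range k, g (i + j) := by
  induction k generalizing i with
  | zero =>
    rw [factorAt_succ]
    simp [factorAt, alt]
  | succ k ih =>
    rw [factorAt_succ, factorAt_succ, alt_cons, ← factorAt_succ, ih (i+1),
      Finset.sum_range_succ' (fun j => g (i+j)) k]
    have h1 : (if paperfold i = paperfold (i+1) then 0 else 1) = g (i + 0) := by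
      simp [g]
    have h2 : ∀ j, g (i + 1 + j) = g (i + (j+1)) := by intro j; congr 1; omega
    simp only [h2] at *
    omega

lemma paperfold_odd (m : ℕ) : paperfold (2*m+1) = decide ((2*m+1) % 4 = 3) := by
  unfold paperfold
  rw [Nat.factorization_eq_zero_of_not_dvd (by omega)]
  simp

lemma pf_mod1 (k : ℕ) (h : k % 4 = 1) : paperfold k = false := by
  obtain ⟨m, rfl⟩ : ∃ m, k = 2*m+1 := ⟨k/2, by omega⟩
  rw [paperfold_odd]
  simp
  omega

lemma pf_mod3 (k : ℕ) (h : k % 4 = 3) : paperfold k = true := by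
  obtain ⟨m, rfl⟩ : ∃ m, k = 2*m+1 := ⟨k/2, by omega⟩
  rw [paperfold_odd]
  simp [h]

lemma pf_double (m : ℕ) (h : m ≠ 0) : paperfold (2*m) = paperfold m := by
  unfold paperfold
  have h2 : (2*m).factorization 2 = m.factorization 2 + 1 := by
    rw [Nat.factorization_mul two_ne_zero h]
    simp [Nat.Prime.factorization_self Nat.prime_two, add_comm]
  rw [h2]
  congr 2
  rw [pow_succ', Nat.mul_div_mul_left _ _ (show 0 < 2 by norm_num)]

lemma g_pair (m : ℕ) : g (2*m+1) + g (2*m+2) = 1 := by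
  have h3 : paperfold (2*m+3) = !paperfold (2*m+1) := by
    rcases Nat.even_or_odd m with ⟨c, hc⟩ | ⟨c, hc⟩
    · rw [pf_mod1 (2*m+1) (by omega), pf_mod3 (2*m+3) (by omega)]; rfl
    · rw [pf_mod3 (2*m+1) (by omega), pf_mod1 (2*m+3) (by omega)]; rfl
  unfold g
  have e1 : 2*m+1+1 = 2*m+2 := by ring
  have e2 : 2*m+2+1 = 2*m+3 := by ring
  rw [e1, e2, h3]
  cases paperfold (2*m+1) <;> cases paperfold (2*m+2) <;> simp

lemma sum_g_pairs (a t : ℕ) : ∑ j ∈ Finset.range (2*t), g (2*a+1+j) = t := by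
  induction t with
  | zero => simp
  | succ t ih =>
    rw [show 2*(t+1) = (2*t+1)+1 from by ring, Finset.sum_range_succ, Finset.sum_range_succ, ih,
      show 2*a+1+(2*t) = 2*(a+t)+1 from by ring, show 2*a+1+(2*t+1) = 2*(a+t)+2 from by ring]
    have := g_pair (a+t)
    omega

lemma A_odd (a n : ℕ) : alt (factorAt paperfold (2*a+1) (8*n+7)) = 4*n+3 := by
  rw [show 8*n+7 = (8*n+6)+1 from rfl, alt_factor,
    show 8*n+6 = 2*(4*n+3) from by ring]
  exact sum_g_pairs a (4*n+3)

lemma A_even (a n : ℕ) : alt (factorAt paperfold (2*a+2) (8*n+7))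
    = 4*n+2 + g (2*a+2) + g (2*(a+4*n+3)+1) := by
  rw [show 8*n+7 = (8*n+6)+1 from rfl, alt_factor,
    show (8*n+6) = (8*n+5)+1 from rfl, Finset.sum_range_succ',
    show (8*n+5) = (8*n+4)+1 from rfl, Finset.sum_range_succ]
  have hmid : ∑ j ∈ Finset.range (8*n+4), g (2*a+2+(j+1)) = 4*n+2 := by
    have h := sum_g_pairs (a+1) (4*n+2)
    rw [show 2*(4*n+2) = 8*n+4 from by ring] at h
    rw [← h]
    apply Finset.sum_congr rfl
    intro j _
    congr 1
    omega
  rw [hmid, show 2*a+2+(8*n+4+1) = 2*(a+4*n+3)+1 from by ring,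
    show 2*a+2+0 = 2*a+2 from rfl]
  ring


lemma red_factor' (i k : ℕ) (h : k ≠ 0) :
    red (factorAt paperfold i k) =
      altList (paperfold i) (alt (factorAt paperfold i k) + 1) := by
  obtain ⟨k', rfl⟩ : ∃ k', k = k'+1 := ⟨k-1, by omega⟩
  exact red_factor i k'

lemma pf1 : paperfold 1 = false := pf_mod1 1 rfl
lemma pf3 : paperfold 3 = true := pf_mod3 3 rfl
lemma pf4 : paperfold 4 = false := by
  rw [show (4:ℕ) = 2*2 from rfl, pf_double 2 (by norm_num),
    show (2:ℕ) = 2*1 from rfl, pf_double 1 (by norm_num)]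
  exact pf1
lemma pf24 : paperfold 24 = true := by
  rw [show (24:ℕ) = 2*12 from rfl, pf_double 12 (by norm_num),
    show (12:ℕ) = 2*6 from rfl, pf_double 6 (by norm_num),
    show (6:ℕ) = 2*3 from rfl, pf_double 3 (by norm_num)]
  exact pf3

lemma g4 : g 4 = 0 := by
  unfold g
  rw [pf4, show (4:ℕ)+1 = 5 from rfl, pf_mod1 5 rfl]
  simp

lemma g24 : g 24 = 1 := by
  unfold g
  rw [pf24, show (24:ℕ)+1 = 25 from rfl, pf_mod1 25 rfl]
  simp

lemma pf8n6 (n : ℕ) : paperfold (8*n+6) = true := by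
  rw [show 8*n+6 = 2*(4*n+3) from by ring, pf_double _ (by omega)]
  exact pf_mod3 _ (by omega)

lemma g8n6 (n : ℕ) : g (8*n+6) = 0 := by
  unfold g
  rw [pf8n6, show 8*n+6+1 = 8*n+7 from rfl, pf_mod3 _ (by omega)]
  simp

lemma g8n9 (n : ℕ) : g (8*n+9) = 0 := by
  unfold g
  rw [pf_mod1 (8*n+9) (by omega), show 8*n+9+1 = 2*(4*n+5) from by ring,
    pf_double _ (by omega), pf_mod1 _ (by omega)]
  simp

lemma g16n11 (n : ℕ) : g (16*n+11) = 0 := by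
  unfold g
  rw [pf_mod3 (16*n+11) (by omega), show 16*n+11+1 = 2*(8*n+6) from by ring,
    pf_double _ (by omega), pf8n6]
  simp

lemma pf24n2 (n : ℕ) : paperfold (24*n+2) = false := by
  rw [show 24*n+2 = 2*(12*n+1) from by ring, pf_double _ (by omega)]
  exact pf_mod1 _ (by omega)

lemma g24n2 (n : ℕ) : g (24*n+2) = 1 := by
  unfold g
  rw [pf24n2, show 24*n+2+1 = 24*n+3 from rfl, pf_mod3 _ (by omega)]
  simp

lemma g32n7 (n : ℕ) : g (32*n+7) = 1 := by
  unfold g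
  rw [pf_mod3 (32*n+7) (by omega), show 32*n+7+1 = 2*(16*n+4) from by ring,
    pf_double _ (by omega), show 16*n+4 = 2*(8*n+2) from by ring,
    pf_double _ (by omega), show 8*n+2 = 2*(4*n+1) from by ring,
    pf_double _ (by omega), pf_mod1 _ (by omega)]
  simp

lemma g8n29 (n : ℕ) : g (8*n+29) = 1 := by
  unfold g
  rw [pf_mod1 (8*n+29) (by omega), show 8*n+29+1 = 2*(4*n+15) from by ring,
    pf_double _ (by omega), pf_mod3 _ (by omega)]
  simp


theorem stmt17 (n : ℕ) :
    redFactorComplexity paperfold (8 * n + 7) = 6 := by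
  classical
  set F : Finset (List Bool) :=
    {altList false (4*n+3), altList false (4*n+4), altList false (4*n+5),
     altList true (4*n+3), altList true (4*n+4), altList true (4*n+5)} with hF
  have key : { u : List Bool | ∃ i ≥ 1, u = red (factorAt paperfold i (8 * n + 7)) } = ↑F := by
    ext u
    simp only [Set.mem_setOf_eq, hF, Finset.coe_insert, Set.mem_insert_iff,
      Finset.coe_singleton, Set.mem_singleton_iff]
    constructor
    · rintro ⟨i, hi1, rfl⟩
      obtain ⟨a, ha⟩ : ∃ a, i = 2*a+1 ∨ i = 2*a+2 := ⟨(i-1)/2, by omega⟩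
      rcases ha with rfl | rfl
      · rw [red_factor' _ _ (by omega), A_odd a n,
          show 4*n+3+1 = 4*n+4 from by omega]
        cases hb : paperfold (2*a+1) <;> tauto
      · rw [red_factor' _ _ (by omega), A_even a n]
        have hx : g (2*a+2) = 0 ∨ g (2*a+2) = 1 := by
          have := g_le_one (2*a+2); omega
        have hy : g (2*(a+4*n+3)+1) = 0 ∨ g (2*(a+4*n+3)+1) = 1 := by
          have := g_le_one (2*(a+4*n+3)+1); omega
        rcases hx with hx | hx <;> rcases hy with hy | hy <;> rw [hx, hy]
        · rw [show 4*n+2+0+0+1 = 4*n+3 from by omega]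
          cases hb : paperfold (2*a+2) <;> tauto
        · rw [show 4*n+2+0+1+1 = 4*n+4 from by omega]
          cases hb : paperfold (2*a+2) <;> tauto
        · rw [show 4*n+2+1+0+1 = 4*n+4 from by omega]
          cases hb : paperfold (2*a+2) <;> tauto
        · rw [show 4*n+2+1+1+1 = 4*n+5 from by omega]
          cases hb : paperfold (2*a+2) <;> tauto
    · rintro (rfl | rfl | rfl | rfl | rfl | rfl)
      · -- altList false (4n+3) : i = 4
        refine ⟨2*1+2, by omega, ?_⟩
        rw [red_factor' _ _ (by omega), A_even 1 n,
          show g (2*1+2) = 0 from g4,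
          show g (2*(1+4*n+3)+1) = g (8*n+9) from by congr 1; ring, g8n9,
          show paperfold (2*1+2) = false from pf4]
      · -- altList false (4n+4) : i = 1
        refine ⟨2*0+1, by omega, ?_⟩
        rw [red_factor' _ _ (by omega), A_odd 0 n,
          show paperfold (2*0+1) = false from pf1]
      · -- altList false (4n+5) : i = 24n+2
        refine ⟨2*(12*n)+2, by omega, ?_⟩
        rw [red_factor' _ _ (by omega), A_even (12*n) n,
          show g (2*(12*n)+2) = g (24*n+2) from by congr 1; ring, g24n2,
          show g (2*(12*n+4*n+3)+1) = g (32*n+7) from by congr 1; ring, g32n7,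
          show paperfold (2*(12*n)+2) = false from by
            rw [show 2*(12*n)+2 = 24*n+2 from by ring]; exact pf24n2 n]
      · -- altList true (4n+3) : i = 8n+6
        refine ⟨2*(4*n+2)+2, by omega, ?_⟩
        rw [red_factor' _ _ (by omega), A_even (4*n+2) n,
          show g (2*(4*n+2)+2) = g (8*n+6) from by congr 1; ring, g8n6,
          show g (2*(4*n+2+4*n+3)+1) = g (16*n+11) from by congr 1; ring, g16n11,
          show paperfold (2*(4*n+2)+2) = true from by
            rw [show 2*(4*n+2)+2 = 8*n+6 from by ring]; exact pf8n6 n]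
      · -- altList true (4n+4) : i = 3
        refine ⟨2*1+1, by omega, ?_⟩
        rw [red_factor' _ _ (by omega), A_odd 1 n,
          show paperfold (2*1+1) = true from pf3]
      · -- altList true (4n+5) : i = 24
        refine ⟨2*11+2, by omega, ?_⟩
        rw [red_factor' _ _ (by omega), A_even 11 n,
          show g (2*11+2) = 1 from g24,
          show g (2*(11+4*n+3)+1) = g (8*n+29) from by congr 1; ring, g8n29,
          show paperfold (2*11+2) = true from pf24]
  have hcard : F.card = 6 := by
    have hA3 : altList false (4*n+3) ∉
        ({altList false (4*n+4), altList false (4*n+5), altList true (4*n+3),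
          altList true (4*n+4), altList true (4*n+5)} : Finset (List Bool)) := by
      simp only [Finset.mem_insert, Finset.mem_singleton]
      push_neg
      exact ⟨altList_ne₁ _ _ _ _ (by omega), altList_ne₁ _ _ _ _ (by omega),
        altList_ne₂ (4*n+2), altList_ne₁ _ _ _ _ (by omega),
        altList_ne₁ _ _ _ _ (by omega)⟩
    have hA4 : altList false (4*n+4) ∉
        ({altList false (4*n+5), altList true (4*n+3),
          altList true (4*n+4), altList true (4*n+5)} : Finset (List Bool)) := by
      simp only [Finset.mem_insert, Finset.mem_singleton]
      push_neg
      exact ⟨altList_ne₁ _ _ _ _ (by omega), altList_ne₁ _ _ _ _ (by omega),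
        altList_ne₂ (4*n+3), altList_ne₁ _ _ _ _ (by omega)⟩
    have hA5 : altList false (4*n+5) ∉
        ({altList true (4*n+3), altList true (4*n+4),
          altList true (4*n+5)} : Finset (List Bool)) := by
      simp only [Finset.mem_insert, Finset.mem_singleton]
      push_neg
      exact ⟨altList_ne₁ _ _ _ _ (by omega), altList_ne₁ _ _ _ _ (by omega),
        altList_ne₂ (4*n+4)⟩
    have hB3 : altList true (4*n+3) ∉
        ({altList true (4*n+4), altList true (4*n+5)} : Finset (List Bool)) := by
      simp only [Finset.mem_insert, Finset.mem_singleton]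
      push_neg
      exact ⟨altList_ne₁ _ _ _ _ (by omega), altList_ne₁ _ _ _ _ (by omega)⟩
    have hB4 : altList true (4*n+4) ∉
        ({altList true (4*n+5)} : Finset (List Bool)) := by
      simp only [Finset.mem_singleton]
      exact altList_ne₁ _ _ _ _ (by omega)
    rw [hF, Finset.card_insert_of_notMem hA3, Finset.card_insert_of_notMem hA4,
      Finset.card_insert_of_notMem hA5, Finset.card_insert_of_notMem hB3,
      Finset.card_insert_of_notMem hB4, Finset.card_singleton]
  unfold redFactorComplexity
  rw [key, Set.ncard_coe_finset, hcard]
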